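/- Let f : ℝ → ℂ be integrable and let t, T, x, p ∈ ℝ. Then ∫_ℝ ∫_ℝ e^{-i(xη + pξ)} e^{-i ξ η² (t-T)} · f(η)/(π(1+ξ²)) dξ dη = ∫_ℝ e^{-|p + η²(t-T)|} f(η) e^{-i x η} dη. -/

import Mathlib

open MeasureTheory Real

open Set Filter Topology
open MeasureTheory Real Set Filter Topology

lemma integral_cexp_Ioi_of_re_neg {c : ℂ} (hc : c.re < 0) :
    ∫ x : ℝ in Ioi (0:ℝ), Complex.exp (c * x) = -1 / c := by
  have hc0 : c ≠ 0 := fun h => by simp [h] at hc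
  have hderiv : ∀ y : ℝ, y ∈ Ici (0:ℝ) →
      HasDerivAt (fun x : ℝ => Complex.exp (c * x) / c) (Complex.exp (c * y)) y := by
    intro y _
    have h1 : HasDerivAt (fun x : ℝ => Complex.exp (c * x)) (Complex.exp (c * y) * c) y := by
      have : HasDerivAt (fun z : ℂ => Complex.exp (c * z)) (Complex.exp (c * y) * c) (y : ℂ) := by
        exact ((Complex.hasDerivAt_exp (c * y)).comp (y:ℂ)
          (hasDerivAt_const_mul (x := (y:ℂ)) c))
      simpa using this.comp_ofReal
    simpa [mul_div_assoc, mul_div_cancel_right₀ _ hc0] using h1.div_const c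
  have hint : IntegrableOn (fun x : ℝ => Complex.exp (c * x)) (Ioi (0:ℝ)) := by
    have hb : IntegrableOn (fun x : ℝ => Real.exp (c.re * x)) (Ioi (0:ℝ)) := by
      have := exp_neg_integrableOn_Ioi (0:ℝ) (neg_pos.mpr hc)
      simpa using this
    apply Integrable.mono' hb
    · exact (Complex.continuous_exp.comp (continuous_const.mul Complex.continuous_ofReal)).aestronglyMeasurable
    · filter_upwards with x
      simp [Complex.norm_exp]
  have htend : Tendsto (fun x : ℝ => Complex.exp (c * x) / c) atTop (𝓝 0) := by
    rw [tendsto_zero_iff_norm_tendsto_zero]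
    have : Tendsto (fun x : ℝ => Real.exp (c.re * x) / ‖c‖) atTop (𝓝 0) := by
      have := Real.tendsto_exp_atBot.comp (tendsto_id.const_mul_atTop_of_neg hc)
      simpa using this.div_const ‖c‖
    refine this.congr fun x => ?_
    simp [Complex.norm_exp]
  have := integral_Ioi_of_hasDerivAt_of_tendsto' hderiv hint htend
  simpa [neg_div] using this


lemma integrable_exp_neg_abs' : Integrable (fun x : ℝ => Real.exp (-|x|)) := by
  rw [← integrableOn_univ, ← Set.Iic_union_Ioi (a := (0:ℝ))]
  apply IntegrableOn.union
  · exact (integrableOn_exp_Iic 0).congr_fun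
      (fun x hx => by rw [abs_of_nonpos hx, neg_neg]) measurableSet_Iic
  · have := exp_neg_integrableOn_Ioi (0:ℝ) one_pos
    exact this.congr_fun (fun x hx => by dsimp only; rw [neg_mul, one_mul, abs_of_pos hx]) measurableSet_Ioi

open FourierTransform in
lemma fourier_exp_neg_abs (ξ : ℝ) :
    𝓕 (fun x : ℝ => (Real.exp (-|x|) : ℂ)) ξ = 2 / (1 + (2*π*ξ:ℂ)^2) := by
  have hcont : Continuous (fun v : ℝ =>
      Complex.exp (↑(-2 * π * (v * ξ)) * Complex.I) * (Real.exp (-|v|) : ℂ)) := by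
    fun_prop
  have hint : Integrable (fun v : ℝ =>
      Complex.exp (↑(-2 * π * (v * ξ)) * Complex.I) * (Real.exp (-|v|) : ℂ)) := by
    apply Integrable.mono' integrable_exp_neg_abs' hcont.aestronglyMeasurable
    filter_upwards with v
    simp [Complex.norm_exp]
  have hre1 : ((-1 : ℂ) - (2*π*ξ)*Complex.I).re < 0 := by simp
  have hre2 : ((-1 : ℂ) + (2*π*ξ)*Complex.I).re < 0 := by simp
  have hIoi : (∫ v : ℝ in Set.Ioi 0,
      Complex.exp (↑(-2 * π * (v * ξ)) * Complex.I) * (Real.exp (-|v|) : ℂ))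
      = -1 / ((-1 : ℂ) - (2*π*ξ)*Complex.I) := by
    rw [← integral_cexp_Ioi_of_re_neg hre1]
    apply setIntegral_congr_fun measurableSet_Ioi
    intro v hv
    dsimp only
    rw [abs_of_pos hv, Complex.ofReal_exp, ← Complex.exp_add]
    congr 1
    push_cast
    ring
  have hIic : (∫ v : ℝ in Set.Iic 0,
      Complex.exp (↑(-2 * π * (v * ξ)) * Complex.I) * (Real.exp (-|v|) : ℂ))
      = -1 / ((-1 : ℂ) + (2*π*ξ)*Complex.I) := by
    rw [show Set.Iic (0:ℝ) = Set.Iic (-0 : ℝ) by norm_num, ← integral_comp_neg_Ioi, ← integral_cexp_Ioi_of_re_neg hre2]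
    apply setIntegral_congr_fun measurableSet_Ioi
    intro v hv
    dsimp only
    rw [abs_neg, abs_of_pos hv, Complex.ofReal_exp, ← Complex.exp_add]
    congr 1
    push_cast
    ring
  rw [Real.fourier_eq']
  simp only [RCLike.inner_apply, starRingEnd_apply, star_trivial, smul_eq_mul, mul_comm ξ]
  rw [← intervalIntegral.integral_Iic_add_Ioi (b := (0:ℝ)) hint.integrableOn hint.integrableOn, hIoi, hIic]
  have h1 : ((-1 : ℂ) - (2*π*ξ)*Complex.I) ≠ 0 := by
    intro h
    have := congrArg Complex.re h
    simp at this
  have h2 : ((-1 : ℂ) + (2*π*ξ)*Complex.I) ≠ 0 := by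
    intro h
    have := congrArg Complex.re h
    simp at this
  have h3 : (1 + (2*π*ξ:ℂ)^2) ≠ 0 := by
    have he : (1 + (2*π*ξ:ℂ)^2) = ((1 + (2*π*ξ)^2 : ℝ) : ℂ) := by push_cast; ring
    rw [he]
    exact Complex.ofReal_ne_zero.mpr (by positivity)
  field_simp
  ring_nf
  rw [Complex.I_sq]
  have h3' : (1 + (π:ℂ)^2*(ξ:ℂ)^2*4) ≠ 0 := by
    convert h3 using 1
    ring
  linear_combination (-2) * mul_inv_cancel₀ h3'

open FourierTransform in
lemma poisson_kernel_integral (a : ℝ) :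
    (∫ u : ℝ, Complex.exp (Complex.I * a * u) / ((π:ℂ) * (1 + (u:ℂ)^2)))
      = (Real.exp (-|a|) : ℂ) := by
  have hne : ∀ u : ℝ, (1 + (u:ℂ)^2) ≠ 0 := by
    intro u
    have he : (1 + (u:ℂ)^2) = ((1 + u^2 : ℝ) : ℂ) := by push_cast; ring
    rw [he]
    exact Complex.ofReal_ne_zero.mpr (by positivity)
  have hπ2 : (1:ℝ) ≤ (2*π)^2 := by nlinarith [Real.pi_gt_three]
  have hg_int : Integrable (fun x : ℝ => (Real.exp (-|x|) : ℂ)) :=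
    integrable_exp_neg_abs'.ofReal
  have hg_cont : Continuous (fun x : ℝ => (Real.exp (-|x|) : ℂ)) := by fun_prop
  have hF : 𝓕 (fun x : ℝ => (Real.exp (-|x|) : ℂ)) = fun ξ : ℝ => 2 / (1 + (2*π*ξ:ℂ)^2) :=
    funext fourier_exp_neg_abs
  have hFi : Integrable (𝓕 (fun x : ℝ => (Real.exp (-|x|) : ℂ))) := by
    rw [hF]
    apply Integrable.mono' (integrable_inv_one_add_sq.const_mul 2)
    · apply Continuous.aestronglyMeasurable
      apply Continuous.div continuous_const (by fun_prop)
      intro ξ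
      have he : (1 + (2*(π:ℂ)*(ξ:ℂ))^2) = ((1 + (2*π*ξ)^2 : ℝ) : ℂ) := by push_cast; ring
      rw [he]
      exact Complex.ofReal_ne_zero.mpr (by positivity)
    · filter_upwards with ξ
      have he : (1 + (2*(π:ℂ)*(ξ:ℂ))^2) = ((1 + (2*π*ξ)^2 : ℝ) : ℂ) := by push_cast; ring
      rw [he]
      have h0 : (0:ℝ) < 1 + (2*π*ξ)^2 := by positivity
      have h1 : (0:ℝ) < 1 + ξ^2 := by positivity
      rw [norm_div, Complex.norm_real, Real.norm_eq_abs, abs_of_pos h0]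
      have hle : 1 + ξ^2 ≤ 1 + (2*π*ξ)^2 := by
        have : ξ^2 ≤ (2*π*ξ)^2 := by
          rw [mul_pow]
          nlinarith [sq_nonneg ξ]
        linarith
      calc ‖(2:ℂ)‖ / (1 + (2*π*ξ)^2) = 2 / (1 + (2*π*ξ)^2) := by norm_num
        _ ≤ 2 / (1 + ξ^2) := by gcongr
        _ = 2 * (1 + ξ^2)⁻¹ := by ring
  have hinv := hg_int.fourierInv_fourier_eq hFi (hg_cont.continuousAt (x := a))
  rw [Real.fourierInv_eq', hF] at hinv
  simp only [RCLike.inner_apply, starRingEnd_apply, star_trivial, smul_eq_mul, mul_comm a] at hinv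
  have h2π : (2*π) ≠ 0 := by positivity
  have hsub' : (∫ x : ℝ, Complex.exp (↑(x*a) * Complex.I) * (2/(1+(x:ℂ)^2)))
      = |2*π| • ∫ ξ : ℝ, Complex.exp (↑(2*π*(ξ*a)) * Complex.I) * (2/(1+(2*π*ξ:ℂ)^2)) := by
    rw [← MeasureTheory.Measure.integral_comp_inv_mul_left
      (fun ξ : ℝ => Complex.exp (↑(2*π*(ξ*a)) * Complex.I) * (2/(1+(2*π*ξ:ℂ)^2))) (2*π)]
    congr 1
    funext x
    have e1 : 2*π*((2*π)⁻¹*x*a) = x*a := by field_simp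
    have e2 : (2*(π:ℂ)*((((2*π)⁻¹*x : ℝ)):ℂ)) = (x:ℂ) := by
      push_cast
      field_simp
    rw [e1, e2]
  rw [hinv] at hsub'
  calc (∫ u : ℝ, Complex.exp (Complex.I * a * u) / ((π:ℂ) * (1 + (u:ℂ)^2)))
      = ∫ u : ℝ, ((2*π:ℝ):ℂ)⁻¹ * (Complex.exp (↑(u*a) * Complex.I) * (2/(1+(u:ℂ)^2))) := by
        congr 1
        funext u
        have hπ0 : ((π:ℝ):ℂ) ≠ 0 := Complex.ofReal_ne_zero.mpr Real.pi_ne_zero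
        have hd := hne u
        have e : ((2*π:ℝ):ℂ)⁻¹ * (2/(1+(u:ℂ)^2)) = ((π:ℂ)*(1+(u:ℂ)^2))⁻¹ := by
          push_cast
          field_simp
        rw [show Complex.I * (a:ℂ) * (u:ℂ) = ((u*a : ℝ):ℂ) * Complex.I by push_cast; ring,
          div_eq_mul_inv, ← e]
        ring
    _ = ((2*π:ℝ):ℂ)⁻¹ * (|2*π| • (Real.exp (-|a|) : ℂ)) := by
        rw [integral_const_mul, hsub']
    _ = (Real.exp (-|a|) : ℂ) := by
        rw [abs_of_pos (by positivity : (0:ℝ) < 2*π)]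
        rw [Complex.real_smul]
        rw [← mul_assoc]
        rw [inv_mul_cancel₀ (by exact_mod_cast h2π)]
        rw [one_mul]

/-- The double inverse Fourier integral representation of the Schrödingerised solution
collapses to the single-integral representation:
`∫∫ e^{-i(xη+pξ)} e^{-iξη²(t-T)} f(η)/(π(1+ξ²)) dξ dη
  = ∫ e^{-|p+η²(t-T)|} f(η) e^{-ixη} dη`. -/
theorem double_fourier_representation
    (f : ℝ → ℂ) (hf : Integrable f) (t T x p : ℝ) :
    (∫ η : ℝ, ∫ ξ : ℝ,
        Complex.exp (-Complex.I * (x * η + p * ξ)) *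
          Complex.exp (-Complex.I * ξ * η ^ 2 * (t - T)) *
            (f η / ((π : ℂ) * (1 + (ξ : ℂ) ^ 2)))) =
      ∫ η : ℝ, (Real.exp (-|p + η ^ 2 * (t - T)|) : ℂ) * f η *
        Complex.exp (-Complex.I * x * η) := by
  refine integral_congr_ae (Filter.Eventually.of_forall fun η => ?_)
  calc (∫ ξ : ℝ,
        Complex.exp (-Complex.I * (x * η + p * ξ)) *
          Complex.exp (-Complex.I * ξ * η ^ 2 * (t - T)) *
            (f η / ((π : ℂ) * (1 + (ξ : ℂ) ^ 2))))
      = ∫ ξ : ℝ, (Complex.exp (-Complex.I * x * η) * f η) *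
          (Complex.exp (Complex.I * ((-(p + η ^ 2 * (t - T)) : ℝ) : ℂ) * (ξ : ℂ)) /
            ((π : ℂ) * (1 + (ξ : ℂ) ^ 2))) := by
        congr 1
        funext ξ
        have hexp : Complex.exp (-Complex.I * (x * η + p * ξ)) *
            Complex.exp (-Complex.I * ξ * η ^ 2 * (t - T))
            = Complex.exp (-Complex.I * x * η) *
              Complex.exp (Complex.I * ((-(p + η ^ 2 * (t - T)) : ℝ) : ℂ) * (ξ : ℂ)) := by
          rw [← Complex.exp_add, ← Complex.exp_add]
          congr 1
          push_cast
          ring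
        rw [hexp]
        ring
    _ = (Complex.exp (-Complex.I * x * η) * f η) *
          ((Real.exp (-|(-(p + η ^ 2 * (t - T)))|) : ℝ) : ℂ) := by
        rw [integral_const_mul, poisson_kernel_integral]
    _ = (Real.exp (-|p + η ^ 2 * (t - T)|) : ℂ) * f η *
        Complex.exp (-Complex.I * x * η) := by
        rw [abs_neg]
        ring
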